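/- Let K be the fractal k-cube of order n with digit set D and let α ∈ A_k, and suppose D_α := D ∩ (n−1)P_α is nonempty. Then K_α := K ∩ P_α is the fractal k-cube with digit set D_α, i.e., the unique nonempty compact set X with nX = X + D_α. Furthermore, with α^0 ∈ {0,1}^k the vector with entries α^0_i = max(α_i,0), the translate K_α^0 = K_α − α^0 is the fractal k-cube with digit set D^0_α = D_α − (n−1)α^0, and K_α^0 is the orthogonal projection of K_α onto E_α = span{e_i : α_i = 0}. -/

import Mathlib

open Set Pointwise MeasureTheory

noncomputable section

/-- Points of `ℝ^k`. -/
abbrev Pt (k : ℕ) := Fin k → ℝ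

/-- A vector with all coordinates in `{0, 1, …, n−1}`. -/
def IsDigit (n : ℕ) {k : ℕ} (d : Pt k) : Prop :=
  ∀ i, ∃ m : ℕ, m < n ∧ d i = (m : ℝ)

/-- A digit set: a nonempty subset of `{0, 1, …, n−1}^k`. -/
def IsDigitSet (n : ℕ) {k : ℕ} (D : Set (Pt k)) : Prop :=
  D.Nonempty ∧ ∀ d ∈ D, IsDigit n d

/-- `K` is the fractal `k`-cube of order `n` with digit set `D`:
a nonempty compact set with `nK = K + D`. -/
def IsFractalCube (n : ℕ) {k : ℕ} (D K : Set (Pt k)) : Prop :=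
  K.Nonempty ∧ IsCompact K ∧ (n : ℝ) • K = K + D

/-- `α ∈ A_k = {−1, 0, 1}^k`. -/
def IsAk {k : ℕ} (α : Pt k) : Prop :=
  ∀ i, α i = -1 ∨ α i = 0 ∨ α i = 1

/-- The unit cube `P = [0,1]^k`. -/
def unitCube (k : ℕ) : Set (Pt k) := {x | ∀ i, 0 ≤ x i ∧ x i ≤ 1}

/-- The face `P_α = P ∩ (P + α)`. -/
def face {k : ℕ} (α : Pt k) : Set (Pt k) :=
  unitCube k ∩ ((fun x => x + α) '' unitCube k)

/-- `α ⊑ β` : `β i = α i` whenever `α i ≠ 0`. -/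
def SqLe {k : ℕ} (α β : Pt k) : Prop := ∀ i, α i ≠ 0 → β i = α i

/-- `α ⊏ β`. -/
def SqLt {k : ℕ} (α β : Pt k) : Prop := SqLe α β ∧ α ≠ β

/-- `F_α = K₁ ∩ (K₂ + α)`. -/
def interF {k : ℕ} (K1 K2 : Set (Pt k)) (α : Pt k) : Set (Pt k) :=
  K1 ∩ ((fun x => x + α) '' K2)

/-- `G_{αβ} = D₁ ∩ (D₂ + nα − β)`. -/
def Gab (n : ℕ) {k : ℕ} (D1 D2 : Set (Pt k)) (α β : Pt k) : Set (Pt k) :=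
  D1 ∩ ((fun x => x + ((n : ℝ) • α - β)) '' D2)

/-- `G_α = G_{αα} = D₁ ∩ (D₂ + (n−1)α)`. -/
def Ga (n : ℕ) {k : ℕ} (D1 D2 : Set (Pt k)) (α : Pt k) : Set (Pt k) :=
  Gab n D1 D2 α α

/-- `β ≻ α` : there is a chain `α = α₀ ⊏ α₁ ⊏ … ⊏ α_p = β` in `A_k` (`p ≥ 1`)
with all `F_{α_j}` nonempty and all `G_{α_{j−1} α_j}` nonempty. -/
def GSucc (n : ℕ) {k : ℕ} (D1 D2 K1 K2 : Set (Pt k)) (β α : Pt k) : Prop :=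
  ∃ p : ℕ, 0 < p ∧ ∃ c : ℕ → Pt k, c 0 = α ∧ c p = β ∧
    (∀ j ≤ p, IsAk (c j)) ∧
    (∀ j < p, SqLt (c j) (c (j + 1))) ∧
    (∀ j ≤ p, (interF K1 K2 (c j)).Nonempty) ∧
    (∀ j < p, (Gab n D1 D2 (c j) (c (j + 1))).Nonempty)

/-- `β ≽ α`. -/
def GSuccEq (n : ℕ) {k : ℕ} (D1 D2 K1 K2 : Set (Pt k)) (β α : Pt k) : Prop :=
  GSucc n D1 D2 K1 K2 β α ∨ β = α

/-- The map `S_d(x) = (x + d)/n`. -/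
def Sdig (n : ℕ) {k : ℕ} (d : Pt k) : Pt k → Pt k :=
  fun x => (n : ℝ)⁻¹ • (x + d)

/-- The `p`-th refinement digit set
`D^(p) = { n^{p−1} d₁ + n^{p−2} d₂ + … + d_p : (d₁, …, d_p) ∈ D^p }`. -/
def refineD (n p : ℕ) {k : ℕ} (D : Set (Pt k)) : Set (Pt k) :=
  {x | ∃ f : Fin p → Pt k, (∀ j, f j ∈ D) ∧
    x = ∑ j : Fin p, ((n : ℝ) ^ (p - 1 - (j : ℕ))) • f j}

/-- A maximal vertex of the structure graph: `F_β ≠ ∅` and no `γ ≻ β`. -/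
def IsMaxVertex (n : ℕ) {k : ℕ} (D1 D2 K1 K2 : Set (Pt k)) (β : Pt k) : Prop :=
  IsAk β ∧ (interF K1 K2 β).Nonempty ∧ ¬∃ γ, IsAk γ ∧ GSucc n D1 D2 K1 K2 γ β

/-- The product `∏ #G_{α_j α_{j+1}}` over consecutive pairs of a chain. -/
def chainProd (n : ℕ) {k : ℕ} (D1 D2 : Set (Pt k)) : List (Pt k) → ℕ
  | [] => 1
  | [_] => 1
  | a :: b :: rest => (Gab n D1 D2 a b).ncard * chainProd n D1 D2 (b :: rest)

/-- A chain `α = α₁ ⊏ α₂ ⊏ … ⊏ α_p = β` inside `Γ_α` ending at a maximal vertex `β`. -/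
def IsMaxChainFrom (n : ℕ) {k : ℕ} (D1 D2 K1 K2 : Set (Pt k)) (α : Pt k)
    (c : List (Pt k)) : Prop :=
  c ≠ [] ∧ c.head? = some α ∧ List.Chain' SqLt c ∧
  (∀ β ∈ c, IsAk β ∧ GSuccEq n D1 D2 K1 K2 β α) ∧
  ∃ β, c.getLast? = some β ∧ IsMaxVertex n D1 D2 K1 K2 β

open ENNReal NNReal

lemma key_step {k n : ℕ} (hn : 2 ≤ n) {E A B : Set (Pt k)}
    (hB : B.Nonempty) (hBc : IsCompact B)
    (hAe : (n : ℝ) • A = A + E) (hBe : (n : ℝ) • B = B + E)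
    {x : Pt k} (hx : x ∈ A) :
    EMetric.infEdist x B ≤ (n : ℝ≥0∞)⁻¹ * EMetric.hausdorffEdist A B := by
  have hn0 : (n : ℝ) ≠ 0 := by positivity
  have hnx : (n : ℝ) • x ∈ A + E := by rw [← hAe]; exact smul_mem_smul_set hx
  obtain ⟨x', hx', d, hd, hxd⟩ := hnx
  have hxd' : x' + d = (n : ℝ) • x := hxd
  obtain ⟨y', hy', hy'e⟩ := hBc.exists_infEdist_eq_edist hB x'
  have hyB : (n : ℝ)⁻¹ • (y' + d) ∈ B := by
    have h1 : y' + d ∈ (n : ℝ) • B := by rw [hBe]; exact ⟨y', hy', d, hd, rfl⟩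
    obtain ⟨b, hb, hbe⟩ := h1
    have hbe' : (n : ℝ) • b = y' + d := hbe
    rw [← hbe', inv_smul_smul₀ hn0]; exact hb
  have hxe : x = (n : ℝ)⁻¹ • (x' + d) := by
    rw [hxd', inv_smul_smul₀ hn0]
  calc EMetric.infEdist x B ≤ edist x ((n : ℝ)⁻¹ • (y' + d)) := EMetric.infEdist_le_edist_of_mem hyB
    _ = (n : ℝ≥0∞)⁻¹ * edist x' y' := by
        have hn0' : (n : ℝ≥0) ≠ 0 := by positivity
        rw [hxe, edist_smul₀, edist_add_right, nnnorm_inv, Real.nnnorm_natCast,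
          ENNReal.smul_def, ENNReal.coe_inv hn0']
        simp [ENNReal.smul_def, ENNReal.coe_inv hn0']
    _ ≤ (n : ℝ≥0∞)⁻¹ * EMetric.hausdorffEdist A B := by
        gcongr
        rw [← hy'e]
        exact EMetric.infEdist_le_hausdorffEdist_of_mem hx'

lemma attractor_unique {k n : ℕ} (hn : 2 ≤ n) {E X Y : Set (Pt k)}
    (hX : X.Nonempty) (hXc : IsCompact X) (hXe : (n : ℝ) • X = X + E)
    (hY : Y.Nonempty) (hYc : IsCompact Y) (hYe : (n : ℝ) • Y = Y + E) : X = Y := by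
  have hfin : EMetric.hausdorffEdist X Y ≠ ⊤ :=
    Metric.hausdorffEdist_ne_top_of_nonempty_of_bounded hX hY hXc.isBounded hYc.isBounded
  have hle : EMetric.hausdorffEdist X Y ≤ (n : ℝ≥0∞)⁻¹ * EMetric.hausdorffEdist X Y := by
    apply EMetric.hausdorffEdist_le_of_infEdist
    · exact fun x hx => key_step hn hY hYc hXe hYe hx
    · intro y hy
      rw [show EMetric.hausdorffEdist X Y = EMetric.hausdorffEdist Y X from EMetric.hausdorffEdist_comm]
      exact key_step hn hX hXc hYe hXe hy
  have h0 : EMetric.hausdorffEdist X Y = 0 := by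
    by_contra h
    have hlt : (n : ℝ≥0∞)⁻¹ * EMetric.hausdorffEdist X Y < 1 * EMetric.hausdorffEdist X Y :=
      (ENNReal.mul_lt_mul_iff_left h hfin).mpr (ENNReal.inv_lt_one.mpr (lt_of_lt_of_le one_lt_two ((by exact_mod_cast hn : (2:ℝ≥0∞) ≤ (n:ℝ≥0∞)))))
    exact absurd hle (not_le.mpr (by simpa using hlt))
  exact EMetric.hausdorffEdist_zero_iff_eq_of_closed hXc.isClosed hYc.isClosed |>.mp h0


lemma digit_bounds {n k : ℕ} (hn : 1 ≤ n) {d : Pt k} (hd : IsDigit n d) (i : Fin k) :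
    0 ≤ d i ∧ d i ≤ (n : ℝ) - 1 := by
  obtain ⟨m, hm, he⟩ := hd i
  have h1 : (m : ℝ) ≤ (n : ℝ) - 1 := by
    have : (m : ℝ) + 1 ≤ (n : ℝ) := by exact_mod_cast hm
    linarith
  exact ⟨he ▸ m.cast_nonneg, he ▸ h1⟩

lemma subset_unitCube {k n : ℕ} (hn : 2 ≤ n) {D K : Set (Pt k)}
    (hD : IsDigitSet n D) (hK : IsFractalCube n D K) : K ⊆ unitCube k := by
  obtain ⟨hne, hc, heq⟩ := hK
  have hn1 : (2:ℝ) ≤ (n:ℝ) := by exact_mod_cast hn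
  intro z hz i
  constructor
  · obtain ⟨x, hxK, hxmin⟩ := hc.exists_isMinOn hne ((continuous_apply i).continuousOn)
    have hnx : (n : ℝ) • x ∈ K + D := by rw [← heq]; exact smul_mem_smul_set hxK
    obtain ⟨y, hy, d, hd, hyd⟩ := hnx
    have hyd' : y i + d i = (n:ℝ) * x i := by
      have := congrFun (hyd : y + d = (n:ℝ) • x) i
      simpa [smul_eq_mul] using this
    have h1 : x i ≤ y i := hxmin hy
    have h2 : 0 ≤ d i := (digit_bounds (by omega) (hD.2 d hd) i).1
    have hx0 : 0 ≤ x i := by nlinarith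
    have h4 : x i ≤ z i := by simpa using hxmin hz
    linarith
  · obtain ⟨x, hxK, hxmax⟩ := hc.exists_isMaxOn hne ((continuous_apply i).continuousOn)
    have hnx : (n : ℝ) • x ∈ K + D := by rw [← heq]; exact smul_mem_smul_set hxK
    obtain ⟨y, hy, d, hd, hyd⟩ := hnx
    have hyd' : y i + d i = (n:ℝ) * x i := by
      have := congrFun (hyd : y + d = (n:ℝ) • x) i
      simpa [smul_eq_mul] using this
    have h1 : y i ≤ x i := hxmax hy
    have h2 : d i ≤ (n:ℝ) - 1 := (digit_bounds (by omega) (hD.2 d hd) i).2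
    have hx1 : x i ≤ 1 := by nlinarith
    have h4 : z i ≤ x i := by simpa using hxmax hz
    linarith

lemma mem_face_iff {k : ℕ} {α : Pt k} (hα : IsAk α) {x : Pt k} :
    x ∈ face α ↔ ∀ i, (α i = 1 → x i = 1) ∧ (α i = -1 → x i = 0) ∧ 0 ≤ x i ∧ x i ≤ 1 := by
  constructor
  · rintro ⟨hP, y, hy, rfl⟩ i
    obtain ⟨h1a, h1b⟩ := hP i
    obtain ⟨h2a, h2b⟩ := hy i
    have h3 : (fun x => x + α) y i = y i + α i := rfl
    rcases hα i with h | h | h <;> rw [h3] at h1a h1b ⊢ <;> rw [h] at h1a h1b ⊢ <;>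
      refine ⟨by intro; linarith, by intro; linarith, by linarith, by linarith⟩
  · intro h
    refine ⟨fun i => ⟨(h i).2.2.1, (h i).2.2.2⟩, x - α, fun i => ?_, by simp⟩
    have h3 : (x - α) i = x i - α i := rfl
    rcases hα i with hh | hh | hh <;> rw [h3, hh] <;>
      [ (exact ⟨by linarith [(h i).2.1 hh], by linarith [(h i).2.1 hh]⟩);
        (exact ⟨by linarith [(h i).2.2.1], by linarith [(h i).2.2.2]⟩);
        (exact ⟨by linarith [(h i).1 hh], by linarith [(h i).1 hh]⟩) ]

lemma mem_smul_face_iff {k n : ℕ} (hn : 2 ≤ n) {α : Pt k} (hα : IsAk α) {y : Pt k} :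
    y ∈ ((n:ℝ) - 1) • face α ↔
      ∀ i, (α i = 1 → y i = (n:ℝ) - 1) ∧ (α i = -1 → y i = 0) ∧ 0 ≤ y i ∧ y i ≤ (n:ℝ) - 1 := by
  have hn1 : (2:ℝ) ≤ (n:ℝ) := by exact_mod_cast hn
  have hc : ((n:ℝ) - 1) ≠ 0 := by linarith
  have hcpos : (0:ℝ) < (n:ℝ) - 1 := by linarith
  rw [Set.mem_smul_set_iff_inv_smul_mem₀ hc, mem_face_iff hα]
  have happ : ∀ i, (((n:ℝ)-1)⁻¹ • y) i = ((n:ℝ)-1)⁻¹ * y i := fun i => rfl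
  constructor
  · intro h i
    obtain ⟨ha, hb, hcc, hdd⟩ := h i
    rw [happ] at ha hb hcc hdd
    refine ⟨fun hh => ?_, fun hh => ?_, ?_, ?_⟩
    · have := ha hh; field_simp at this; linarith
    · have := hb hh; field_simp at this; linarith
    · have h5 : ((n:ℝ)-1) * (((n:ℝ)-1)⁻¹ * y i) = y i := by field_simp
      linarith [mul_nonneg hcpos.le hcc]
    · have h5 : ((n:ℝ)-1) * (((n:ℝ)-1)⁻¹ * y i) = y i := by field_simp
      linarith [mul_le_mul_of_nonneg_left hdd hcpos.le]
  · intro h i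
    obtain ⟨ha, hb, hcc, hdd⟩ := h i
    rw [happ]
    refine ⟨fun hh => ?_, fun hh => ?_, by positivity, ?_⟩
    · rw [ha hh]; field_simp
    · rw [hb hh]; ring
    · rw [inv_mul_le_iff₀ hcpos]; linarith

lemma isClosed_face {k : ℕ} (α : Pt k) : IsClosed (face α) := by
  have hP : IsClosed (unitCube k) := by
    have : unitCube k = Set.Icc (0 : Pt k) 1 := by
      ext x; simp [unitCube, Set.mem_Icc, Pi.le_def, forall_and]
    rw [this]; exact isClosed_Icc
  exact hP.inter ((Homeomorph.addRight α).isClosedMap _ hP)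

lemma face_equation {k n : ℕ} (hn : 2 ≤ n) {D K : Set (Pt k)}
    (hD : IsDigitSet n D) (hK : IsFractalCube n D K) {α : Pt k} (hα : IsAk α) :
    (n : ℝ) • (K ∩ face α) = (K ∩ face α) + (D ∩ ((n:ℝ) - 1) • face α) := by
  have hn1 : (2:ℝ) ≤ (n:ℝ) := by exact_mod_cast hn
  have hKP := subset_unitCube hn hD hK
  obtain ⟨hne, hc, heq⟩ := hK
  ext z
  constructor
  · rintro ⟨x, ⟨hxK, hxF⟩, rfl⟩
    have hnx : (n : ℝ) • x ∈ K + D := by rw [← heq]; exact smul_mem_smul_set hxK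
    obtain ⟨y, hy, d, hd, hyd⟩ := hnx
    have hyd' : ∀ i, y i + d i = (n:ℝ) * x i := fun i => by
      have := congrFun (hyd : y + d = (n:ℝ) • x) i
      simpa [smul_eq_mul] using this
    have hxf := (mem_face_iff hα).mp hxF
    have hdb := fun i => digit_bounds (by omega) (hD.2 d hd) i
    have hyP := hKP hy
    have hyF : y ∈ face α := by
      rw [mem_face_iff hα]
      intro i
      obtain ⟨hf1, hf2, hf3, hf4⟩ := hxf i
      obtain ⟨hy1, hy2⟩ := hyP i
      refine ⟨fun hh => ?_, fun hh => ?_, hy1, hy2⟩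
      · have := hf1 hh; have := (hdb i).2; have := hyd' i; nlinarith
      · have := hf2 hh; have := (hdb i).1; have := hyd' i; nlinarith
    have hdF : d ∈ ((n:ℝ) - 1) • face α := by
      rw [mem_smul_face_iff hn hα]
      intro i
      obtain ⟨hf1, hf2, hf3, hf4⟩ := hxf i
      obtain ⟨hy1, hy2⟩ := hyP i
      refine ⟨fun hh => ?_, fun hh => ?_, (hdb i).1, (hdb i).2⟩
      · have := hf1 hh; have := (hdb i).2; have := hyd' i; nlinarith
      · have := hf2 hh; have := (hdb i).1; have := hyd' i; nlinarith
    exact ⟨y, ⟨hy, hyF⟩, d, ⟨hd, hdF⟩, hyd⟩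
  · rintro ⟨y, ⟨hyK, hyF⟩, d, ⟨hdD, hdF⟩, rfl⟩
    have hyd : y + d ∈ (n:ℝ) • K := by rw [heq]; exact ⟨y, hyK, d, hdD, rfl⟩
    obtain ⟨x, hxK, hx⟩ := hyd
    have hx' : (n:ℝ) • x = y + d := hx
    have hxc : ∀ i, (n:ℝ) * x i = y i + d i := fun i => by
      have := congrFun hx' i; simpa [smul_eq_mul] using this
    have hyf := (mem_face_iff hα).mp hyF
    have hdf := (mem_smul_face_iff hn hα).mp hdF
    have hxF : x ∈ face α := by
      rw [mem_face_iff hα]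
      intro i
      obtain ⟨hf1, hf2, hf3, hf4⟩ := hyf i
      obtain ⟨hg1, hg2, hg3, hg4⟩ := hdf i
      have hxi := hxc i
      refine ⟨fun hh => ?_, fun hh => ?_, ?_, ?_⟩
      · have := hf1 hh; have := hg1 hh; nlinarith
      · have := hf2 hh; have := hg2 hh; nlinarith
      · nlinarith
      · nlinarith
    exact ⟨x, ⟨hxK, hxF⟩, hx⟩

lemma fixedpoint_mem {k n : ℕ} (hn : 2 ≤ n) {D K : Set (Pt k)}
    (hK : IsFractalCube n D K) {d : Pt k} (hd : d ∈ D) :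
    ((n:ℝ) - 1)⁻¹ • d ∈ K := by
  have hn1 : (2:ℝ) ≤ (n:ℝ) := by exact_mod_cast hn
  have hnne : (n:ℝ) ≠ 0 := by linarith
  have hcne : (n:ℝ) - 1 ≠ 0 := by linarith
  obtain ⟨⟨x0, hx0⟩, hc, heq⟩ := hK
  set S : Pt k → Pt k := fun x => (n:ℝ)⁻¹ • (x + d) with hS
  have hSK : ∀ x ∈ K, S x ∈ K := by
    intro x hx
    have : x + d ∈ (n:ℝ) • K := by rw [heq]; exact ⟨x, hx, d, hd, rfl⟩
    obtain ⟨y, hy, hye⟩ := this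
    have hye' : (n:ℝ) • y = x + d := hye
    have : S x = y := by rw [hS]; simp only [← hye', inv_smul_smul₀ hnne]
    rwa [this]
  set p : Pt k := ((n:ℝ) - 1)⁻¹ • d with hp
  have hfix : S p = p := by
    rw [hS, hp]
    funext i
    simp only [Pi.smul_apply, Pi.add_apply, smul_eq_mul]
    field_simp
    ring
  have hmem : ∀ m : ℕ, S^[m] x0 ∈ K := by
    intro m
    induction m with
    | zero => simpa using hx0
    | succ m ih => rw [Function.iterate_succ_apply']; exact hSK _ ih
  have hdist : ∀ m : ℕ, dist (S^[m] x0) p ≤ ((n:ℝ)⁻¹) ^ m * dist x0 p := by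
    intro m
    induction m with
    | zero => simp
    | succ m ih =>
      rw [Function.iterate_succ_apply']
      have : dist (S (S^[m] x0)) p = (n:ℝ)⁻¹ * dist (S^[m] x0) p := by
        conv_lhs => rw [← hfix]
        rw [hS]
        simp only []
        rw [dist_smul₀, dist_add_right, Real.norm_eq_abs, abs_of_nonneg (by positivity)]
      rw [this, pow_succ]
      have hnn : (0:ℝ) ≤ (n:ℝ)⁻¹ := by positivity
      calc (n:ℝ)⁻¹ * dist (S^[m] x0) p ≤ (n:ℝ)⁻¹ * (((n:ℝ)⁻¹) ^ m * dist x0 p) := by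
            exact mul_le_mul_of_nonneg_left ih hnn
        _ = ((n:ℝ)⁻¹) ^ m * (n:ℝ)⁻¹ * dist x0 p := by ring
  have htend : Filter.Tendsto (fun m => S^[m] x0) Filter.atTop (nhds p) := by
    rw [tendsto_iff_dist_tendsto_zero]
    apply squeeze_zero (fun m => dist_nonneg) hdist
    have h1 : |((n:ℝ)⁻¹)| < 1 := by
      rw [abs_of_nonneg (by positivity)]
      rw [inv_lt_one_iff₀]; right; linarith
    have := tendsto_pow_atTop_nhds_zero_of_abs_lt_one h1
    simpa using this.mul_const (dist x0 p)
  exact hc.isClosed.mem_of_tendsto htend (Filter.Eventually.of_forall hmem)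

lemma translate_cube {k n : ℕ} (hn : 2 ≤ n) {D K : Set (Pt k)} (hK : IsFractalCube n D K)
    (t : Pt k) :
    IsFractalCube n ((fun x => x - ((n:ℝ) - 1) • t) '' D) ((fun x => x - t) '' K) := by
  obtain ⟨hne, hc, heq⟩ := hK
  refine ⟨hne.image _, hc.image (by continuity), ?_⟩
  ext z
  constructor
  · rintro ⟨w, ⟨x, hx, rfl⟩, rfl⟩
    have : (n:ℝ) • x ∈ K + D := by rw [← heq]; exact smul_mem_smul_set hx
    obtain ⟨y, hy, e, he, hye⟩ := this
    have hye' : y + e = (n:ℝ) • x := hye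
    refine ⟨y - t, ⟨y, hy, rfl⟩, e - ((n:ℝ) - 1) • t, ⟨e, he, rfl⟩, ?_⟩
    show (y - t) + (e - ((n:ℝ) - 1) • t) = (n:ℝ) • (x - t)
    rw [smul_sub, ← hye']
    module
  · rintro ⟨w, ⟨y, hy, rfl⟩, v, ⟨e, he, rfl⟩, rfl⟩
    have : y + e ∈ (n:ℝ) • K := by rw [heq]; exact ⟨y, hy, e, he, rfl⟩
    obtain ⟨x, hx, hxe⟩ := this
    have hxe' : (n:ℝ) • x = y + e := hxe
    refine ⟨x - t, ⟨x, hx, rfl⟩, ?_⟩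
    show (n:ℝ) • (x - t) = (y - t) + (e - ((n:ℝ) - 1) • t)
    rw [smul_sub, hxe']
    module


/-- `K_α = K ∩ P_α` is the fractal cube with digit set
`D_α = D ∩ (n−1)P_α`; moreover `K_α − α⁰` is the fractal cube with digit set
`D_α − (n−1)α⁰` and equals the orthogonal projection of `K_α` onto
`E_α = span{e_i : α_i = 0}`. -/
theorem face_of_fractalCube {k n : ℕ} (hk : 1 ≤ k) (hn : 2 ≤ n)
    (D K : Set (Pt k)) (hD : IsDigitSet n D) (hK : IsFractalCube n D K)
    (α : Pt k) (hα : IsAk α)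
    (hne : (D ∩ ((n : ℝ) - 1) • face α).Nonempty)
    (α0 : Pt k) (hα0 : α0 = fun i => max (α i) 0) :
    IsFractalCube n (D ∩ ((n : ℝ) - 1) • face α) (K ∩ face α) ∧
    (∀ X : Set (Pt k), IsFractalCube n (D ∩ ((n : ℝ) - 1) • face α) X →
      X = K ∩ face α) ∧
    IsFractalCube n ((fun x => x - ((n : ℝ) - 1) • α0) '' (D ∩ ((n : ℝ) - 1) • face α))
      ((fun x => x - α0) '' (K ∩ face α)) ∧
    (∀ X : Set (Pt k),
      IsFractalCube n ((fun x => x - ((n : ℝ) - 1) • α0) '' (D ∩ ((n : ℝ) - 1) • face α)) X →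
      X = (fun x => x - α0) '' (K ∩ face α)) ∧
    (fun x => x - α0) '' (K ∩ face α)
      = (fun (x : Pt k) i => if α i = 0 then x i else 0) '' (K ∩ face α) := by
  have hn1 : (2:ℝ) ≤ (n:ℝ) := by exact_mod_cast hn
  have hKαc : IsCompact (K ∩ face α) := hK.2.1.inter_right (isClosed_face α)
  have hKαne : (K ∩ face α).Nonempty := by
    obtain ⟨d, hdD, hdF⟩ := hne
    refine ⟨((n:ℝ) - 1)⁻¹ • d, fixedpoint_mem hn hK hdD, ?_⟩
    have hc : ((n:ℝ) - 1) ≠ 0 := by linarith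
    exact (Set.mem_smul_set_iff_inv_smul_mem₀ hc _ _).mp hdF
  have heq1 := face_equation hn hD hK hα
  have part1 : IsFractalCube n (D ∩ ((n : ℝ) - 1) • face α) (K ∩ face α) :=
    ⟨hKαne, hKαc, heq1⟩
  have part3 := translate_cube hn part1 α0
  refine ⟨part1, ?_, part3, ?_, ?_⟩
  · intro X hX
    exact attractor_unique hn hX.1 hX.2.1 hX.2.2 hKαne hKαc heq1
  · intro X hX
    exact attractor_unique hn hX.1 hX.2.1 hX.2.2 part3.1 part3.2.1 part3.2.2
  · apply Set.image_congr
    intro x hx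
    obtain ⟨hxK, hxF⟩ := hx
    have hface := (mem_face_iff hα).mp hxF
    subst hα0
    funext i
    show x i - max (α i) 0 = if α i = 0 then x i else 0
    rcases hα i with h1 | h1 | h1
    · rw [h1, (hface i).2.1 h1]; norm_num
    · rw [h1]; norm_num
    · rw [h1, (hface i).1 h1]; norm_num
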